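/- For any positive odd integer n and coprime nonzero integers x, y with x + y ≠ 0, the gcd of (x+y) and (x^n + y^n)/(x+y) equals the gcd of (x+y) and n. -/

import Mathlib

lemma gcd_congr_of_dvd_sub (s a b : ℤ) (h : s ∣ a - b) :
    Int.gcd s a = Int.gcd s b := by
  apply Nat.dvd_antisymm
  · have h1 : (↑(Int.gcd s a) : ℤ) ∣ b := by
      have := (Int.gcd_dvd_left (a := s) (b := a)).trans h
      have h2 : (↑(Int.gcd s a) : ℤ) ∣ a - (a - b) :=
        dvd_sub (Int.gcd_dvd_right s a) this
      simpa using h2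
    exact Int.natCast_dvd_natCast.mp (Int.dvd_coe_gcd (Int.gcd_dvd_left s a) h1)
  · have h1 : (↑(Int.gcd s b) : ℤ) ∣ a := by
      have := (Int.gcd_dvd_left (a := s) (b := b)).trans h
      have h2 : (↑(Int.gcd s b) : ℤ) ∣ b + (a - b) :=
        dvd_add (Int.gcd_dvd_right s b) this
      simpa using h2
    exact Int.natCast_dvd_natCast.mp (Int.dvd_coe_gcd (Int.gcd_dvd_left s b) h1)

theorem stmt_0 (n : ℕ) (hn : Odd n) (hnpos : 0 < n) (x y : ℤ)
    (hx : x ≠ 0) (hy : y ≠ 0) (hxy : IsCoprime x y) (hsum : x + y ≠ 0) :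
    Int.gcd (x + y) ((x ^ n + y ^ n) / (x + y)) = Int.gcd (x + y) n := by
  set s : ℤ := x + y with hs
  set Q : ℤ := ∑ i ∈ Finset.range n, x ^ i * (-y) ^ (n - 1 - i) with hQ
  have key : Q * s = x ^ n + y ^ n := by
    have := geom_sum₂_mul x (-y) n
    rw [hn.neg_pow] at this
    rw [hQ, hs]
    linear_combination this
  have hdiv : (x ^ n + y ^ n) / s = Q := by
    rw [← key, Int.mul_ediv_cancel _ hsum]
  rw [hdiv]
  -- Q ≡ n * y^(n-1) mod s
  have hmod : s ∣ Q - (n : ℤ) * y ^ (n - 1) := by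
    have : Q - (n : ℤ) * y ^ (n - 1) =
        ∑ i ∈ Finset.range n, (x ^ i * (-y) ^ (n - 1 - i) - y ^ (n - 1)) := by
      rw [hQ, Finset.sum_sub_distrib, Finset.sum_const, Finset.card_range,
        nsmul_eq_mul]
    rw [this]
    apply Finset.dvd_sum
    intro i hi
    rw [Finset.mem_range] at hi
    have hterm : x ^ i * (-y) ^ (n - 1 - i) - y ^ (n - 1)
        = (x ^ i - (-y) ^ i) * (-y) ^ (n - 1 - i) := by
      have h1 : (-y) ^ i * (-y) ^ (n - 1 - i) = (-y) ^ (n - 1) := by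
        rw [← pow_add]
        congr 1
        omega
      have h2 : (-y) ^ (n - 1) = y ^ (n - 1) := by
        rcases hn with ⟨k, hk⟩
        have : n - 1 = 2 * k := by omega
        rw [this]
        simp [pow_mul, neg_pow]
      rw [sub_mul, h1, h2]
    rw [hterm]
    apply dvd_mul_of_dvd_left
    have := sub_dvd_pow_sub_pow x (-y) i
    simpa [hs, sub_neg_eq_add] using this
  obtain ⟨k, hk⟩ := hmod
  have hQeq : Q = (n : ℤ) * y ^ (n - 1) + s * k := by linarith
  rw [gcd_congr_of_dvd_sub s Q ((n : ℤ) * y ^ (n - 1)) ⟨k, hk⟩]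
  -- gcd s (n * y^(n-1)) = gcd s n since s coprime to y
  have hcop : IsCoprime s y := by
    have := hxy.add_mul_left_left 1
    simpa [hs] using this
  have hcop' : IsCoprime s (y ^ (n - 1)) := hcop.pow_right
  have hnat : Nat.Coprime s.natAbs (y ^ (n - 1)).natAbs :=
    Int.isCoprime_iff_gcd_eq_one.mp hcop'
  have : Int.gcd s ((n : ℤ) * y ^ (n - 1)) = Int.gcd s (n : ℤ) := by
    unfold Int.gcd
    rw [Int.natAbs_mul]
    exact Nat.Coprime.gcd_mul_right_cancel_right _ hnat.symm
  rw [this]
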